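/- For all natural numbers p and q, if the bottom row of a triangular board with p+q-2 levels is colored with p-1 positions in color X and q-1 positions in color Y, and this pattern is extended so each row of size r has at most min(r, p-1) X-positions and at most min(r, q-1) Y-positions appropriately, then there exists a two-coloring of the board with p+q-2 levels in which neither color contains a triangular subset with p levels (for X) or q levels (for Y). Hence the triangular Ramsey number satisfies R_1(p,q,1) > p+q-2. -/

import Mathlib

/-- The `n`-th triangular number. -/
def T (n : ℕ) : ℕ := n * (n + 1) / 2

/-- The positions of a triangular board with `m` levels, labeled `1, …, T m`
row by row; row `r` consists of the labels in `(T (r-1), T r]`. -/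
def board (m : ℕ) : Finset ℕ := Finset.Icc 1 (T m)

/-- `S` is a triangular subset with `n` levels (a `△_n`) of the board with `m` levels:
there are rows `1 ≤ rows 0 < rows 1 < ⋯ ≤ m` and, for each `j`, a set of `j + 1`
positions lying in row `rows j`, whose union is `S`. -/
def IsTriangleOn (m n : ℕ) (S : Finset ℕ) : Prop :=
  ∃ rows : Fin n → ℕ, StrictMono rows ∧ (∀ j, 1 ≤ rows j) ∧ (∀ j, rows j ≤ m) ∧
    ∃ L : Fin n → Finset ℕ,
      (∀ j, (L j).card = (j : ℕ) + 1) ∧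
      (∀ j, L j ⊆ Finset.Ioc (T (rows j - 1)) (T (rows j))) ∧
      S = Finset.univ.biUnion L

/-- The triangular Ramsey number `R₁(p, q, 1)`: the least `m ≥ max p q` such that
every partition of the positions of the board with `m` levels into two color
classes `X` and its complement contains a `△_p` entirely in `X` or a `△_q`
entirely in the complement of `X`. -/
noncomputable def R1 (p q : ℕ) : ℕ :=
  sInf {m | max p q ≤ m ∧ ∀ X : Finset ℕ, X ⊆ board m →
    (∃ S, IsTriangleOn m p S ∧ S ⊆ X) ∨
    (∃ S, IsTriangleOn m q S ∧ S ⊆ board m \ X)}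

/-- There is a two-coloring of the board with `p + q - 2` levels in which the first
color contains no `△_p` and the second color contains no `△_q`; hence
`R₁(p, q, 1) > p + q - 2`. -/
lemma T_succ (n : ℕ) : T (n + 1) = T n + (n + 1) := by
  unfold T
  have h : (n+1) * (n+1+1) = n * (n+1) + 2 * (n+1) := by ring
  omega

lemma T_mono {m n : ℕ} (h : m ≤ n) : T m ≤ T n :=
  Nat.div_le_div_right (Nat.mul_le_mul h (by omega))

lemma smono_ge {n c : ℕ} {rows : Fin n → ℕ} (h : StrictMono rows)
    (hc : ∀ j, c ≤ rows j) : ∀ jv (hj : jv < n), c + jv ≤ rows ⟨jv, hj⟩ := by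
  intro jv
  induction jv with
  | zero => intro hj; simpa using hc ⟨0, hj⟩
  | succ k ih =>
      intro hj
      have h1 := ih (by omega)
      have h2 : rows ⟨k, by omega⟩ < rows ⟨k+1, hj⟩ := h (Fin.mk_lt_mk.mpr (by omega))
      omega

lemma mono_m {m m' n : ℕ} {S : Finset ℕ} (h : m ≤ m') (ht : IsTriangleOn m n S) :
    IsTriangleOn m' n S := by
  obtain ⟨rows, a, b, c, L, d, e, f⟩ := ht
  exact ⟨rows, a, b, fun j => le_trans (c j) h, L, d, e, f⟩

lemma shrink {m a p : ℕ} {S : Finset ℕ} (hp : p ≤ a) (h : IsTriangleOn m a S) :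
    ∃ S', IsTriangleOn m p S' ∧ S' ⊆ S := by
  obtain ⟨rows, hsm, h1, hm, L, hc, hs, rfl⟩ := h
  refine ⟨_, ⟨fun j => rows (Fin.castLE hp j), hsm.comp (Fin.strictMono_castLE hp),
    fun j => h1 _, fun j => hm _,
    fun j => L (Fin.castLE hp j), fun j => hc _, fun j => hs _, rfl⟩, ?_⟩
  intro x hx
  rw [Finset.mem_biUnion] at hx ⊢
  obtain ⟨j, _, hj⟩ := hx
  exact ⟨Fin.castLE hp j, Finset.mem_univ _, hj⟩

lemma extend {n a : ℕ} {Y S : Finset ℕ} (hS : IsTriangleOn n a S) (hSY : S ⊆ Y)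
    {Lnew : Finset ℕ} (hL : Lnew ⊆ Finset.Ioc (T n) (T (n+1)) ∩ Y)
    (hcard : Lnew.card = a + 1) :
    ∃ S', IsTriangleOn (n+1) (a+1) S' ∧ S' ⊆ Y := by
  obtain ⟨rows, hsm, h1, hm, L, hc, hs, rfl⟩ := hS
  refine ⟨_, ⟨fun j => if h : (j:ℕ) < a then rows ⟨j, h⟩ else n+1, ?_, ?_, ?_,
    fun j => if h : (j:ℕ) < a then L ⟨j, h⟩ else Lnew, ?_, ?_, rfl⟩, ?_⟩
  · intro i j hij
    have hij' : (i:ℕ) < (j:ℕ) := hij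
    rcases lt_or_ge (j:ℕ) a with hj | hj
    · have hi : (i:ℕ) < a := lt_trans hij' hj
      simp only [dif_pos hi, dif_pos hj]
      exact hsm (Fin.mk_lt_mk.mpr hij')
    · have hi : (i:ℕ) < a := by omega
      simp only [dif_pos hi, dif_neg (not_lt.mpr hj)]
      exact lt_of_le_of_lt (hm _) (by omega)
  · intro j
    by_cases h : (j:ℕ) < a
    · simp only [dif_pos h]; exact h1 _
    · simp only [dif_neg h]; omega
  · intro j
    by_cases h : (j:ℕ) < a
    · simp only [dif_pos h]; exact le_trans (hm _) (by omega)
    · simp only [dif_neg h]; exact le_rfl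
  · intro j
    by_cases h : (j:ℕ) < a
    · simp only [dif_pos h]; exact hc _
    · have hj : (j:ℕ) = a := by omega
      simp only [dif_neg h]; rw [hcard, hj]
  · intro j
    by_cases h : (j:ℕ) < a
    · simp only [dif_pos h]; exact hs _
    · simp only [dif_neg h]
      refine (hL.trans (Finset.inter_subset_left)).trans ?_
      simp
  · intro x hx
    rw [Finset.mem_biUnion] at hx
    obtain ⟨j, _, hj⟩ := hx
    by_cases h : (j:ℕ) < a
    · simp only [dif_pos h] at hj
      exact hSY (Finset.mem_biUnion.mpr ⟨⟨j, h⟩, Finset.mem_univ _, hj⟩)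
    · simp only [dif_neg h] at hj
      exact Finset.mem_of_mem_inter_right (hL hj)

lemma build (n : ℕ) (X : Finset ℕ) :
    ∃ a b, a + b = n ∧
      (∃ S, IsTriangleOn n a S ∧ S ⊆ X) ∧
      (∃ S, IsTriangleOn n b S ∧ S ⊆ board n \ X) := by
  induction n with
  | zero =>
      refine ⟨0, 0, rfl, ⟨∅, ?_, Finset.empty_subset _⟩, ⟨∅, ?_, Finset.empty_subset _⟩⟩ <;>
      exact ⟨Fin.elim0, fun i _ _ => i.elim0, fun i => i.elim0, fun i => i.elim0,
        Fin.elim0, fun i => i.elim0, fun i => i.elim0, by simp⟩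
  | succ n ih =>
      obtain ⟨a, b, hab, ⟨SX, hSX, hSXsub⟩, ⟨SY, hSY, hSYsub⟩⟩ := ih
      have hrowcard : (Finset.Ioc (T n) (T (n+1))).card = n + 1 := by
        rw [Nat.card_Ioc]; have := T_succ n; omega
      have hboard : Finset.Ioc (T n) (T (n+1)) ⊆ board (n+1) := by
        intro x hx
        simp only [Finset.mem_Ioc] at hx
        simp only [board, Finset.mem_Icc]
        omega
      have hbmono : board n \ X ⊆ board (n+1) \ X :=
        Finset.sdiff_subset_sdiff (Finset.Icc_subset_Icc le_rfl (T_mono (by omega))) le_rfl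
      by_cases hc : a + 1 ≤ (Finset.Ioc (T n) (T (n+1)) ∩ X).card
      · obtain ⟨Lnew, hLsub, hLcard⟩ := Finset.exists_subset_card_eq hc
        obtain ⟨S', hS', hsub'⟩ := extend hSX hSXsub hLsub hLcard
        exact ⟨a+1, b, by omega, ⟨S', hS', hsub'⟩,
          ⟨SY, mono_m (by omega) hSY, hSYsub.trans hbmono⟩⟩
      · have hcd : b + 1 ≤ (Finset.Ioc (T n) (T (n+1)) \ X).card := by
          have := Finset.card_inter_add_card_sdiff (Finset.Ioc (T n) (T (n+1))) X
          omega
        obtain ⟨Lnew, hLsub, hLcard⟩ := Finset.exists_subset_card_eq hcd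
        have hLsub' : Lnew ⊆ Finset.Ioc (T n) (T (n+1)) ∩ (board (n+1) \ X) := by
          intro x hx
          have := hLsub hx
          simp only [Finset.mem_sdiff] at this
          simp only [Finset.mem_inter, Finset.mem_sdiff]
          exact ⟨this.1, hboard this.1, this.2⟩
        obtain ⟨S', hS', hsub'⟩ := extend hSY (hSYsub.trans hbmono) hLsub' hLcard
        exact ⟨a, b+1, by omega, ⟨SX, mono_m (by omega) hSX, hSXsub⟩, ⟨S', hS', hsub'⟩⟩

lemma no_p {p k : ℕ} (hp : 1 ≤ p) {S : Finset ℕ}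
    (h : IsTriangleOn k p S) (hS : S ⊆ board (p-1)) : False := by
  obtain ⟨rows, hsm, h1, hm, L, hc, hs, rfl⟩ := h
  have hlt : p - 1 < p := by omega
  have hr : 1 + (p-1) ≤ rows ⟨p-1, hlt⟩ := smono_ge hsm h1 (p-1) hlt
  obtain ⟨x, hx⟩ : (L ⟨p-1, hlt⟩).Nonempty := by
    rw [← Finset.card_pos, hc]; omega
  have hxb := hS (Finset.mem_biUnion.mpr ⟨_, Finset.mem_univ _, hx⟩)
  have hxIoc := hs _ hx
  simp only [board, Finset.mem_Icc] at hxb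
  simp only [Finset.mem_Ioc] at hxIoc
  have hT : T (p-1) ≤ T (rows ⟨p-1, hlt⟩ - 1) := T_mono (by omega)
  omega

lemma no_q {p q k : ℕ} (hp : 1 ≤ p) (hq : 1 ≤ q) (hk : k ≤ p + q - 2) {S : Finset ℕ}
    (h : IsTriangleOn k q S) (hS : S ⊆ board k \ board (p-1)) : False := by
  obtain ⟨rows, hsm, h1, hm, L, hc, hs, rfl⟩ := h
  have hge : ∀ j : Fin q, p ≤ rows j := by
    intro j
    obtain ⟨x, hx⟩ : (L j).Nonempty := by rw [← Finset.card_pos, hc]; omega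
    have hxS := hS (Finset.mem_biUnion.mpr ⟨j, Finset.mem_univ _, hx⟩)
    have hxIoc := hs j hx
    simp only [Finset.mem_sdiff, board, Finset.mem_Icc, not_and, not_le] at hxS
    simp only [Finset.mem_Ioc] at hxIoc
    by_contra hcon
    have hT : T (rows j) ≤ T (p-1) := T_mono (by omega)
    omega
  have hlt : q - 1 < q := by omega
  have h2 := smono_ge hsm hge (q-1) hlt
  have h3 := hm ⟨q-1, hlt⟩
  omega

theorem R1_lower_bound (p q : ℕ) (hp : 1 ≤ p) (hq : 1 ≤ q) :
    (∃ X : Finset ℕ, X ⊆ board (p + q - 2) ∧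
      ¬(∃ S, IsTriangleOn (p + q - 2) p S ∧ S ⊆ X) ∧
      ¬(∃ S, IsTriangleOn (p + q - 2) q S ∧ S ⊆ board (p + q - 2) \ X)) ∧
    p + q - 2 < R1 p q := by
  have hnop : ∀ k, ¬∃ S, IsTriangleOn k p S ∧ S ⊆ board (p-1) :=
    fun k ⟨S, h1, h2⟩ => no_p hp h1 h2
  have hnoq : ∀ k, k ≤ p+q-2 → ¬∃ S, IsTriangleOn k q S ∧ S ⊆ board k \ board (p-1) :=
    fun k hk ⟨S, h1, h2⟩ => no_q hp hq hk h1 h2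
  constructor
  · exact ⟨board (p-1), Finset.Icc_subset_Icc le_rfl (T_mono (by omega)),
      hnop _, hnoq _ le_rfl⟩
  · have hmem : (p + q - 1) ∈ {m | max p q ≤ m ∧ ∀ X : Finset ℕ, X ⊆ board m →
        (∃ S, IsTriangleOn m p S ∧ S ⊆ X) ∨
        (∃ S, IsTriangleOn m q S ∧ S ⊆ board m \ X)} := by
      constructor
      · simp only [max_le_iff]; omega
      · intro X _
        obtain ⟨a, b, hab, hA, hB⟩ := build (p+q-1) X
        rcases le_or_gt p a with h | h
        · left
          obtain ⟨S, hS, hsub⟩ := hA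
          obtain ⟨S', h1, h2⟩ := shrink h hS
          exact ⟨S', h1, h2.trans hsub⟩
        · right
          have hqb : q ≤ b := by omega
          obtain ⟨S, hS, hsub⟩ := hB
          obtain ⟨S', h1, h2⟩ := shrink hqb hS
          exact ⟨S', h1, h2.trans hsub⟩
    rw [R1]
    by_contra hcon
    push_neg at hcon
    have hinf := Nat.sInf_mem ⟨_, hmem⟩
    obtain ⟨hmax, hcol⟩ := hinf
    have hple : p - 1 ≤ sInf _ := le_trans (by omega : p - 1 ≤ max p q) hmax
    rcases hcol (board (p-1)) (Finset.Icc_subset_Icc le_rfl (T_mono hple)) with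
      ⟨S, h1, h2⟩ | ⟨S, h1, h2⟩
    · exact no_p hp h1 h2
    · exact no_q hp hq hcon h1 h2
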